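/- Let 𝒳, 𝒜 be finite sets, h, γ > 0, and f(x,a,μ) a cost function with |f(x,a,μ)| ≤ F for all (x,a,μ) and |f(x,a,μ₁) − f(x,a,μ₂)| ≤ L_f ‖μ₁−μ₂‖_TV. Let p(x'|x,a,μ) be transition probabilities (p(·|x,a,μ) is a probability distribution on 𝒳) with Σ_{x'} |p(x'|x,a,μ₁) − p(x'|x,a,μ₂)| ≤ L_p ‖μ₁−μ₂‖_TV for all x,a. Suppose (Q*, μ̃*) satisfies the Bellman equation Q*(x,a) = h f(x,a,μ̃*) + e^{−γh} Σ_{x'} p(x'|x,a,μ̃*) min_{a'} Q*(x',a') for all (x,a). Let 0 < ρ^Q ≤ 1, let μ_k be probability distributions on 𝒳, and let Q_{k+1}(x,a) = Q_k(x,a) + ρ^Q ( h f(x,a,μ_k) + e^{−γh} Σ_{x'} p(x'|x,a,μ_k) min_{a'} Q_k(x',a') − Q_k(x,a) ), where ‖Q_k‖_∞ ≤ hF/(1 − e^{−γh}). Then ‖Q_{k+1} − Q*‖_∞ ≤ (1 − ρ^Q(1 − e^{−γh})) ‖Q_k − Q*‖_∞ + ρ^Q h ( L_f + L_p F/(e^{γh}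 − 1) ) ‖μ_k − μ̃*‖_TV. -/
import Mathlib


open Finset

/-- A probability distribution on a finite set. -/
def IsProb {𝒳 : Type*} [Fintype 𝒳] (μ : 𝒳 → ℝ) : Prop :=
  (∀ x, 0 ≤ μ x) ∧ ∑ x, μ x = 1

/-- Total variation norm: `‖m‖_TV = sup_{A ⊆ 𝒳} |Σ_{x∈A} m(x)|`. -/
noncomputable def tvNorm {𝒳 : Type*} [Fintype 𝒳] (m : 𝒳 → ℝ) : ℝ :=
  ⨆ A : Finset 𝒳, |∑ x ∈ A, m x|

/-- Sup norm `‖Q‖_∞ = max_{(x,a)} |Q(x,a)|` for `Q : 𝒳 × 𝒜 → ℝ`. -/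
noncomputable def supNorm {𝒳 𝒜 : Type*} [Fintype 𝒳] [Fintype 𝒜] (Q : 𝒳 → 𝒜 → ℝ) : ℝ :=
  ⨆ q : 𝒳 × 𝒜, |Q q.1 q.2|

section aux
variable {𝒳 𝒜 : Type*} [Fintype 𝒳] [Fintype 𝒜] [Nonempty 𝒳] [Nonempty 𝒜]

lemma supNorm_le' {Q : 𝒳 → 𝒜 → ℝ} {c : ℝ} (hc : ∀ x a, |Q x a| ≤ c) : supNorm Q ≤ c :=
  ciSup_le fun q => hc q.1 q.2

omit [Nonempty 𝒳] [Nonempty 𝒜] in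
lemma le_supNorm' (Q : 𝒳 → 𝒜 → ℝ) (x : 𝒳) (a : 𝒜) : |Q x a| ≤ supNorm Q :=
  le_ciSup (f := fun q : 𝒳 × 𝒜 => |Q q.1 q.2|) (Set.Finite.bddAbove (Set.finite_range _)) (x, a)

lemma supNorm_nonneg' (Q : 𝒳 → 𝒜 → ℝ) : 0 ≤ supNorm Q :=
  le_trans (abs_nonneg _) (le_supNorm' Q (Classical.arbitrary _) (Classical.arbitrary _))

omit [Fintype 𝒳] [Nonempty 𝒳] in
lemma exists_iInf_eq (g : 𝒜 → ℝ) : ∃ a, (⨅ a', g a') = g a := by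
  obtain ⟨a, ha⟩ := Finite.exists_min g
  exact ⟨a, le_antisymm (ciInf_le (Set.Finite.bddBelow (Set.finite_range _)) a) (le_ciInf ha)⟩

omit [Fintype 𝒳] [Nonempty 𝒳] in
lemma abs_iInf_sub_iInf_le {g g' : 𝒜 → ℝ} {c : ℝ} (hc : ∀ a, |g a - g' a| ≤ c) :
    |(⨅ a, g a) - ⨅ a, g' a| ≤ c := by
  obtain ⟨a1, h1⟩ := exists_iInf_eq g
  obtain ⟨a2, h2⟩ := exists_iInf_eq g'
  have e1 : (⨅ a, g a) ≤ g a2 := ciInf_le (Set.Finite.bddBelow (Set.finite_range _)) a2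
  have e2 : (⨅ a, g' a) ≤ g' a1 := ciInf_le (Set.Finite.bddBelow (Set.finite_range _)) a1
  have h3 := abs_le.mp (hc a1)
  have h4 := abs_le.mp (hc a2)
  rw [abs_le]
  constructor <;> [linarith [h1]; linarith [h2]]

end aux

/-- One-step contraction estimate for the Q-iteration towards a Bellman fixed point. -/
theorem Q_iteration_contraction {𝒳 𝒜 : Type*} [Fintype 𝒳] [Fintype 𝒜]
    [Nonempty 𝒳] [Nonempty 𝒜]
    (h γ F Lf Lp ρQ : ℝ) (hh : 0 < h) (hγ : 0 < γ)
    (f : 𝒳 → 𝒜 → (𝒳 → ℝ) → ℝ)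
    (hfb : ∀ x a μ, |f x a μ| ≤ F)
    (hflip : ∀ x a μ₁ μ₂, |f x a μ₁ - f x a μ₂| ≤ Lf * tvNorm (fun y => μ₁ y - μ₂ y))
    (p : 𝒳 → 𝒳 → 𝒜 → (𝒳 → ℝ) → ℝ)
    (hp : ∀ x a μ, IsProb (fun x' => p x' x a μ))
    (hplip : ∀ x a μ₁ μ₂,
      ∑ x', |p x' x a μ₁ - p x' x a μ₂| ≤ Lp * tvNorm (fun y => μ₁ y - μ₂ y))
    (Qstar : 𝒳 → 𝒜 → ℝ) (μstar : 𝒳 → ℝ) (hμstar : IsProb μstar)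
    (hbell : ∀ x a, Qstar x a = h * f x a μstar +
      Real.exp (-γ * h) * ∑ x', p x' x a μstar * (⨅ a', Qstar x' a'))
    (hρ : 0 < ρQ ∧ ρQ ≤ 1)
    (μk : 𝒳 → ℝ) (hμk : IsProb μk)
    (Qk Qk1 : 𝒳 → 𝒜 → ℝ)
    (hQkb : supNorm Qk ≤ h * F / (1 - Real.exp (-γ * h)))
    (hup : ∀ x a, Qk1 x a = Qk x a + ρQ * (h * f x a μk +
      Real.exp (-γ * h) * (∑ x', p x' x a μk * (⨅ a', Qk x' a')) - Qk x a)) :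
    supNorm (fun x a => Qk1 x a - Qstar x a) ≤
      (1 - ρQ * (1 - Real.exp (-γ * h))) * supNorm (fun x a => Qk x a - Qstar x a) +
        ρQ * h * (Lf + Lp * F / (Real.exp (γ * h) - 1)) *
          tvNorm (fun y => μk y - μstar y) := by
  obtain ⟨hρ0, hρ1⟩ := hρ
  set β := Real.exp (-γ * h) with hβdef
  set E := Real.exp (γ * h) with hEdef
  have hβ0 : 0 < β := Real.exp_pos _
  have hE1 : (1:ℝ) < E := by
    rw [hEdef, ← Real.exp_zero]
    exact Real.exp_lt_exp.mpr (by positivity)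
  have hβE : β * E = 1 := by
    rw [hβdef, hEdef, ← Real.exp_add]
    norm_num
  have hβ1 : β < 1 := by nlinarith
  set t := tvNorm (fun y => μk y - μstar y) with htdef
  set Δ := supNorm (fun x a => Qk x a - Qstar x a) with hΔdef
  set S := supNorm Qstar with hSdef
  have hΔ0 : 0 ≤ Δ := supNorm_nonneg' _
  have hS0 : 0 ≤ S := supNorm_nonneg' _
  have hF0 : 0 ≤ F :=
    (abs_nonneg _).trans (hfb (Classical.arbitrary _) (Classical.arbitrary _) μstar)
  have hLpt : 0 ≤ Lp * t :=
    le_trans (Finset.sum_nonneg fun x' _ => abs_nonneg _)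
      (hplip (Classical.arbitrary _) (Classical.arbitrary _) μk μstar)
  have hinf : ∀ x', |⨅ a', Qstar x' a'| ≤ S := by
    intro x'
    obtain ⟨a0, ha0⟩ := exists_iInf_eq (fun a' => Qstar x' a')
    rw [ha0]
    exact le_supNorm' Qstar x' a0
  have hsum_bound : ∀ (μ : 𝒳 → ℝ) x a (g : 𝒳 → ℝ) (c : ℝ), (∀ x', |g x'| ≤ c) →
      |∑ x', p x' x a μ * g x'| ≤ c := by
    intro μ x a g c hg
    calc |∑ x', p x' x a μ * g x'| ≤ ∑ x', |p x' x a μ * g x'| :=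
          Finset.abs_sum_le_sum_abs _ _
      _ ≤ ∑ x', p x' x a μ * c := by
          refine Finset.sum_le_sum fun x' _ => ?_
          rw [abs_mul, abs_of_nonneg ((hp x a μ).1 x')]
          exact mul_le_mul_of_nonneg_left (hg x') ((hp x a μ).1 x')
      _ = c := by rw [← Finset.sum_mul, (hp x a μ).2, one_mul]
  have hS_ineq : S ≤ h * F + β * S := by
    apply supNorm_le'
    intro x a
    rw [hbell x a]
    calc |h * f x a μstar + β * ∑ x', p x' x a μstar * (⨅ a', Qstar x' a')|
        ≤ |h * f x a μstar| + |β * ∑ x', p x' x a μstar * (⨅ a', Qstar x' a')| :=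
          abs_add_le _ _
      _ ≤ h * F + β * S := by
          rw [abs_mul, abs_mul, abs_of_pos hh, abs_of_pos hβ0]
          gcongr
          · exact hfb x a μstar
          · exact hsum_bound μstar x a _ S hinf
  have hβS : β * S ≤ h * F / (E - 1) := by
    rw [le_div_iff₀ (by linarith)]
    nlinarith
  have hdiff : ∀ x', |(⨅ a', Qk x' a') - ⨅ a', Qstar x' a'| ≤ Δ := fun x' =>
    abs_iInf_sub_iInf_le fun a => le_supNorm' (fun x a => Qk x a - Qstar x a) x' a
  apply supNorm_le'
  intro x a
  have hsplit : (∑ x', p x' x a μk * (⨅ a', Qk x' a')) -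
        ∑ x', p x' x a μstar * (⨅ a', Qstar x' a') =
      (∑ x', p x' x a μk * ((⨅ a', Qk x' a') - ⨅ a', Qstar x' a'))
        + ∑ x', (p x' x a μk - p x' x a μstar) * (⨅ a', Qstar x' a') := by
    rw [← Finset.sum_add_distrib, ← Finset.sum_sub_distrib]
    exact Finset.sum_congr rfl fun x' _ => by ring
  have e0 : Qk1 x a - Qstar x a =
      (1 - ρQ) * (Qk x a - Qstar x a) + ρQ * h * (f x a μk - f x a μstar)
      + ρQ * β * ((∑ x', p x' x a μk * (⨅ a', Qk x' a'))
          - ∑ x', p x' x a μstar * (⨅ a', Qstar x' a')) := by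
    linear_combination hup x a - ρQ * hbell x a
  have e : Qk1 x a - Qstar x a =
      (1 - ρQ) * (Qk x a - Qstar x a) + ρQ * h * (f x a μk - f x a μstar)
      + ρQ * β * ((∑ x', p x' x a μk * ((⨅ a', Qk x' a') - ⨅ a', Qstar x' a'))
          + ∑ x', (p x' x a μk - p x' x a μstar) * (⨅ a', Qstar x' a')) := by
    rw [e0, hsplit]
  have hA : |∑ x', p x' x a μk * ((⨅ a', Qk x' a') - ⨅ a', Qstar x' a')| ≤ Δ :=
    hsum_bound μk x a _ Δ hdiff
  have hB : |∑ x', (p x' x a μk - p x' x a μstar) * (⨅ a', Qstar x' a')| ≤ Lp * t * S := by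
    calc |∑ x', (p x' x a μk - p x' x a μstar) * (⨅ a', Qstar x' a')|
        ≤ ∑ x', |(p x' x a μk - p x' x a μstar) * (⨅ a', Qstar x' a')| :=
          Finset.abs_sum_le_sum_abs _ _
      _ ≤ ∑ x', |p x' x a μk - p x' x a μstar| * S := by
          refine Finset.sum_le_sum fun x' _ => ?_
          rw [abs_mul]
          exact mul_le_mul_of_nonneg_left (hinf x') (abs_nonneg _)
      _ = (∑ x', |p x' x a μk - p x' x a μstar|) * S := by rw [Finset.sum_mul]
      _ ≤ Lp * t * S := mul_le_mul_of_nonneg_right (hplip x a μk μstar) hS0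
  have h1 : |Qk x a - Qstar x a| ≤ Δ := le_supNorm' (fun x a => Qk x a - Qstar x a) x a
  have h2 : |f x a μk - f x a μstar| ≤ Lf * t := hflip x a μk μstar
  rw [e]
  calc |(1 - ρQ) * (Qk x a - Qstar x a) + ρQ * h * (f x a μk - f x a μstar)
      + ρQ * β * ((∑ x', p x' x a μk * ((⨅ a', Qk x' a') - ⨅ a', Qstar x' a'))
          + ∑ x', (p x' x a μk - p x' x a μstar) * (⨅ a', Qstar x' a'))|
      ≤ |(1 - ρQ) * (Qk x a - Qstar x a)| + |ρQ * h * (f x a μk - f x a μstar)|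
      + |ρQ * β * ((∑ x', p x' x a μk * ((⨅ a', Qk x' a') - ⨅ a', Qstar x' a'))
          + ∑ x', (p x' x a μk - p x' x a μstar) * (⨅ a', Qstar x' a'))| :=
        (abs_add_le _ _).trans (by gcongr; exact abs_add_le _ _)
    _ ≤ (1 - ρQ) * Δ + ρQ * h * (Lf * t) + ρQ * β * (Δ + Lp * t * S) := by
        simp only [abs_mul]
        rw [abs_of_nonneg (by linarith : (0:ℝ) ≤ 1 - ρQ),
          abs_of_pos hρ0, abs_of_pos hh, abs_of_pos hβ0]
        gcongr <;> first
          | exact (abs_add_le _ _).trans (add_le_add hA hB)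
          | exact h1
          | exact h2
          | positivity
          | linarith
    _ ≤ (1 - ρQ * (1 - β)) * Δ + ρQ * h * (Lf + Lp * F / (E - 1)) * t := by
        have key : ρQ * β * (Lp * t * S) ≤ ρQ * (Lp * t) * (h * F / (E - 1)) := by
          calc ρQ * β * (Lp * t * S) = (ρQ * (Lp * t)) * (β * S) := by ring
            _ ≤ (ρQ * (Lp * t)) * (h * F / (E - 1)) :=
                mul_le_mul_of_nonneg_left hβS (mul_nonneg hρ0.le hLpt)
            _ = ρQ * (Lp * t) * (h * F / (E - 1)) := by ring
        have eq2 : ρQ * (Lp * t) * (h * F / (E - 1)) = ρQ * h * (Lp * F / (E - 1)) * t := by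
          ring
        have eq3 : (1 - ρQ) * Δ + ρQ * h * (Lf * t) + ρQ * β * (Δ + Lp * t * S)
            = (1 - ρQ * (1 - β)) * Δ + ρQ * h * Lf * t + ρQ * β * (Lp * t * S) := by ring
        have eq4 : ρQ * h * (Lf + Lp * F / (E - 1)) * t
            = ρQ * h * Lf * t + ρQ * h * (Lp * F / (E - 1)) * t := by ring
        linarith
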